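/- Let 0 < q < 1, s ∈ ℝ and n ≥ 1. Then H_n(x,s|q) equals the composition of linear operators (M_x - s q^{n-2} D_q)∘(M_x - s q^{n-3} D_q)∘···∘(M_x - s q^{-1} D_q) applied to the constant polynomial 1, where M_x is multiplication by x, and the j-th factor from the left is M_x - s·q^{n-1-j}·D_q for j = 1,…,n. -/

import Mathlib

/-- The q-number `{n}_q = 1 + q + ⋯ + q^{n-1}`. -/
noncomputable def qNum (q : ℝ) (n : ℕ) : ℝ := ∑ k ∈ Finset.range n, q ^ k

/-- The q-factorial `{n}_q! = Π_{k=1}^n {k}_q`. -/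
noncomputable def qFact (q : ℝ) (n : ℕ) : ℝ := ∏ k ∈ Finset.range n, qNum q (k + 1)

/-- The even q-double factorial `{2k}_q!! = Π_{l=1}^k {2l}_q`. -/
noncomputable def qDoubleFact (q : ℝ) (k : ℕ) : ℝ := ∏ l ∈ Finset.range k, qNum q (2 * (l + 1))

/-- The q-Hermite polynomial `H_n(x,s|q) = Σ_{k=0}^{⌊n/2⌋} (-1)^k q^{k(k-1)}
({n}_q!/({n-2k}_q!·{2k}_q!!)) s^k x^{n-2k}`. -/
noncomputable def qHermite (q s : ℝ) (n : ℕ) : Polynomial ℝ :=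
  ∑ k ∈ Finset.range (n / 2 + 1),
    Polynomial.C ((-1 : ℝ) ^ k * q ^ (k * (k - 1)) *
        (qFact q n / (qFact q (n - 2 * k) * qDoubleFact q k)) * s ^ k) *
      Polynomial.X ^ (n - 2 * k)

/-- The q-derivative on polynomials: it sends `x^j` to `{j}_q x^{j-1}`. -/
noncomputable def qDeriv (q : ℝ) (f : Polynomial ℝ) : Polynomial ℝ :=
  f.sum fun j a => Polynomial.C (a * qNum q j) * Polynomial.X ^ (j - 1)

lemma qNum_zero (q : ℝ) : qNum q 0 = 0 := by simp [qNum]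
lemma qNum_one (q : ℝ) : qNum q 1 = 1 := by simp [qNum]

lemma qNum_pos {q : ℝ} (hq0 : 0 < q) {n : ℕ} (hn : 0 < n) : 0 < qNum q n := by
  refine Finset.sum_pos (fun i _ => pow_pos hq0 i) ?_
  simpa using hn.ne'

lemma qNum_ne {q : ℝ} (hq0 : 0 < q) {n : ℕ} (hn : 0 < n) : qNum q n ≠ 0 :=
  (qNum_pos hq0 hn).ne'

lemma qNum_add (q : ℝ) (a b : ℕ) : qNum q (a + b) = qNum q a + q ^ a * qNum q b := by
  simp [qNum, Finset.sum_range_add, Finset.mul_sum, pow_add]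

lemma qFact_succ (q : ℝ) (n : ℕ) : qFact q (n + 1) = qFact q n * qNum q (n + 1) :=
  Finset.prod_range_succ _ _

lemma qFact_zero (q : ℝ) : qFact q 0 = 1 := rfl
lemma qFact_one (q : ℝ) : qFact q 1 = 1 := by simp [qFact, qNum]

lemma qDoubleFact_succ (q : ℝ) (k : ℕ) :
    qDoubleFact q (k + 1) = qDoubleFact q k * qNum q (2 * k + 2) := by
  rw [qDoubleFact, Finset.prod_range_succ, 
    show 2 * (k + 1) = 2 * k + 2 by ring]; rfl

lemma qFact_pos {q : ℝ} (hq0 : 0 < q) (n : ℕ) : 0 < qFact q n :=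
  Finset.prod_pos fun i _ => qNum_pos hq0 (Nat.succ_pos i)

lemma qFact_ne {q : ℝ} (hq0 : 0 < q) (n : ℕ) : qFact q n ≠ 0 := (qFact_pos hq0 n).ne'

lemma qDoubleFact_pos {q : ℝ} (hq0 : 0 < q) (k : ℕ) : 0 < qDoubleFact q k :=
  Finset.prod_pos fun i _ => qNum_pos hq0 (by positivity)

lemma qDoubleFact_ne {q : ℝ} (hq0 : 0 < q) (k : ℕ) : qDoubleFact q k ≠ 0 :=
  (qDoubleFact_pos hq0 k).ne'

lemma qDeriv_zero (q : ℝ) : qDeriv q 0 = 0 := Polynomial.sum_zero_index _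

lemma qDeriv_add (q : ℝ) (f g : Polynomial ℝ) :
    qDeriv q (f + g) = qDeriv q f + qDeriv q g := by
  refine Polynomial.sum_add_index f g _ (fun i => by simp) (fun a b₁ b₂ => by
    rw [add_mul, map_add, add_mul])

lemma qDeriv_C_mul_X_pow (q a : ℝ) (m : ℕ) :
    qDeriv q (Polynomial.C a * Polynomial.X ^ m) =
      Polynomial.C (a * qNum q m) * Polynomial.X ^ (m - 1) := by
  rw [Polynomial.C_mul_X_pow_eq_monomial, qDeriv, Polynomial.sum_monomial_index]
  simp

lemma qDeriv_sum (q : ℝ) {ι : Type*} (t : Finset ι) (f : ι → Polynomial ℝ) :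
    qDeriv q (∑ i ∈ t, f i) = ∑ i ∈ t, qDeriv q (f i) := by
  classical
  induction t using Finset.induction_on with
  | empty => simp [qDeriv_zero]
  | insert _ _ h ih => rw [Finset.sum_insert h, Finset.sum_insert h, qDeriv_add, ih]

lemma qDeriv_one (q : ℝ) : qDeriv q 1 = 0 := by
  have := qDeriv_C_mul_X_pow q 1 0
  simpa [qNum_zero] using this

lemma key_coeff (q : ℝ) (hq0 : 0 < q) (s : ℝ) (r k : ℕ) :
    (-1:ℝ)^(k+1) * q^((k+1)*k) *
        (qFact q (r+2*k+3) / (qFact q (r+1) * qDoubleFact q (k+1))) * s^(k+1)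
      = (-1:ℝ)^(k+1) * q^((k+1)*k) *
          (qFact q (r+2*k+2) / (qFact q r * qDoubleFact q (k+1))) * s^(k+1)
        - s * q^(r+2*k+1) *
          ((-1:ℝ)^k * q^(k*(k-1)) *
              (qFact q (r+2*k+2) / (qFact q (r+2) * qDoubleFact q k)) * s^k
            * qNum q (r+2)) := by
  have h1 : qFact q (r+2*k+3) = qFact q (r+2*k+2) * qNum q (r+2*k+3) := qFact_succ q (r+2*k+2)
  have h2 : qFact q (r+1) = qFact q r * qNum q (r+1) := qFact_succ q r
  have h3 : qFact q (r+2) = qFact q r * qNum q (r+1) * qNum q (r+2) := by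
    rw [show r + 2 = (r+1)+1 by ring, qFact_succ, h2]
  have h4 : qDoubleFact q (k+1) = qDoubleFact q k * qNum q (2*k+2) := qDoubleFact_succ q k
  have h5 : qNum q (r+2*k+3) = qNum q (r+1) + q^(r+1) * qNum q (2*k+2) := by
    rw [show r+2*k+3 = (r+1)+(2*k+2) by ring, qNum_add]
  have h6 : q^((k+1)*k) = q^(k*(k-1)) * q^(2*k) := by
    rw [← pow_add]
    congr 1
    cases k <;> simp <;> ring
  have e1 : qFact q r ≠ 0 := qFact_ne hq0 r
  have e2 : qNum q (r+1) ≠ 0 := qNum_ne hq0 (by omega)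
  have e3 : qNum q (r+2) ≠ 0 := qNum_ne hq0 (by omega)
  have e4 : qDoubleFact q k ≠ 0 := qDoubleFact_ne hq0 k
  have e5 : qNum q (2*k+2) ≠ 0 := qNum_ne hq0 (by omega)
  rw [h1, h2, h3, h4, h5, h6]
  field_simp
  ring

lemma bdry_coeff (q : ℝ) (hq0 : 0 < q) (s : ℝ) (m : ℕ) :
    (-1:ℝ)^(m+1) * q^((m+1)*m) *
        (qFact q (2*m+2) / (qFact q 0 * qDoubleFact q (m+1))) * s^(m+1)
      = - (s * q^(2*m) *
          ((-1:ℝ)^m * q^(m*(m-1)) *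
              (qFact q (2*m+1) / (qFact q 1 * qDoubleFact q m)) * s^m * qNum q 1)) := by
  have h1 : qFact q (2*m+2) = qFact q (2*m+1) * qNum q (2*m+2) := qFact_succ q (2*m+1)
  have h4 : qDoubleFact q (m+1) = qDoubleFact q m * qNum q (2*m+2) := qDoubleFact_succ q m
  have h6 : q^((m+1)*m) = q^(m*(m-1)) * q^(2*m) := by
    rw [← pow_add]; congr 1; cases m <;> simp <;> ring
  have e4 : qDoubleFact q m ≠ 0 := qDoubleFact_ne hq0 m
  have e5 : qNum q (2*m+2) ≠ 0 := qNum_ne hq0 (by omega)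
  rw [h1, h4, h6, qFact_zero, qFact_one, qNum_one]
  field_simp
  ring

lemma combineA {α : Type*} [AddCommGroup α] (L R1 R2 : ℕ → α) (m : ℕ)
    (h0 : L 0 = R1 0)
    (hb : L (m+1) = - R2 m)
    (hk : ∀ k < m, L (k+1) = R1 (k+1) - R2 k) :
    ∑ k ∈ Finset.range (m+2), L k
      = ∑ k ∈ Finset.range (m+1), R1 k - ∑ k ∈ Finset.range (m+1), R2 k := by
  rw [show m+2 = (m+1)+1 from rfl, Finset.sum_range_succ' L, Finset.sum_range_succ,
    Finset.sum_range_succ' R1, Finset.sum_range_succ R2]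
  have h : ∑ k ∈ Finset.range m, L (k+1) = ∑ k ∈ Finset.range m, (R1 (k+1) - R2 k) :=
    Finset.sum_congr rfl (fun k hk' => hk k (Finset.mem_range.mp hk'))
  rw [h, Finset.sum_sub_distrib, h0, hb]
  abel

lemma combineB {α : Type*} [AddCommGroup α] (L R1 R2 : ℕ → α) (M : ℕ)
    (h0 : L 0 = R1 0)
    (htop : R2 M = 0)
    (hk : ∀ k < M, L (k+1) = R1 (k+1) - R2 k) :
    ∑ k ∈ Finset.range (M+1), L k
      = ∑ k ∈ Finset.range (M+1), R1 k - ∑ k ∈ Finset.range (M+1), R2 k := by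
  rw [Finset.sum_range_succ' L, Finset.sum_range_succ' R1, Finset.sum_range_succ R2, htop, add_zero]
  have h : ∑ k ∈ Finset.range M, L (k+1) = ∑ k ∈ Finset.range M, (R1 (k+1) - R2 k) :=
    Finset.sum_congr rfl (fun k hk' => hk k (Finset.mem_range.mp hk'))
  rw [h, Finset.sum_sub_distrib, h0]
  abel

lemma key_poly (q : ℝ) (hq0 : 0 < q) (s : ℝ) (r k : ℕ) :
    Polynomial.C ((-1:ℝ)^(k+1) * q^((k+1)*k) *
        (qFact q (r+2*k+3) / (qFact q (r+1) * qDoubleFact q (k+1))) * s^(k+1)) *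
        Polynomial.X^(r+1)
      = Polynomial.C ((-1:ℝ)^(k+1) * q^((k+1)*k) *
          (qFact q (r+2*k+2) / (qFact q r * qDoubleFact q (k+1))) * s^(k+1)) *
          Polynomial.X^(r+1)
        - Polynomial.C (s * q^(r+2*k+1) *
            ((-1:ℝ)^k * q^(k*(k-1)) *
              (qFact q (r+2*k+2) / (qFact q (r+2) * qDoubleFact q k)) * s^k * qNum q (r+2))) *
            Polynomial.X^(r+1) := by
  rw [key_coeff q hq0 s r k, Polynomial.C_sub, sub_mul]


lemma qHermite_rec (q : ℝ) (hq0 : 0 < q) (s : ℝ) (n : ℕ) :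
    qHermite q s (n+2) = Polynomial.X * qHermite q s (n+1)
      - Polynomial.C (s * q^n) * qDeriv q (qHermite q s (n+1)) := by
  rw [qHermite, qHermite, qDeriv_sum, Finset.mul_sum, Finset.mul_sum]
  simp_rw [qDeriv_C_mul_X_pow]
  have hX : ∀ (a : ℝ) (e : ℕ), (Polynomial.X : Polynomial ℝ) * (Polynomial.C a * Polynomial.X^e)
      = Polynomial.C a * Polynomial.X^(e+1) := by intro a e; ring
  simp_rw [hX]
  have hC : ∀ (a b : ℝ) (e : ℕ), Polynomial.C a * (Polynomial.C b * Polynomial.X^e)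
      = Polynomial.C (a*b) * Polynomial.X^e := by
    intro a b e; rw [← mul_assoc, ← Polynomial.C_mul]
  simp_rw [hC]
  rcases Nat.even_or_odd n with ⟨m, hm⟩ | ⟨m, hm⟩
  · -- n = m+m, oldn = m+m+1 odd
    subst hm
    rw [show (m+m+2)/2+1 = m+2 by omega, show (m+m+1)/2+1 = m+1 by omega]
    refine combineA _ _ _ m ?_ ?_ ?_
    · -- leading terms
      norm_num
      rw [show qDoubleFact q 0 = 1 from rfl, mul_one, mul_one,
        div_self (qFact_ne hq0 _), div_self (qFact_ne hq0 _)]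
    · -- boundary term
      rw [show (m+1)*((m+1)-1) = (m+1)*m from rfl,
        show m+m+2-2*(m+1) = 0 by omega, show m+m+1-2*m-1 = 0 by omega,
        show m+m+1-2*m = 1 by omega,
        show m+m+2 = 2*m+2 by omega, show m+m+1 = 2*m+1 by omega,
        show m+m = 2*m by omega]
      rw [pow_zero, mul_one, mul_one, bdry_coeff q hq0 s m, map_neg]
    · -- interior terms
      intro k hk
      obtain ⟨r, hr⟩ : ∃ r, m+m+1 = r+2*k+2 := ⟨m+m-2*k-1, by omega⟩
      rw [show (k+1)*((k+1)-1) = (k+1)*k from rfl,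
        show m+m+2-2*(k+1) = r+1 by omega,
        show m+m+1-2*(k+1)+1 = r+1 by omega,
        show m+m+1-2*(k+1) = r by omega,
        show m+m+1-2*k-1 = r+1 by omega,
        show m+m+1-2*k = r+2 by omega,
        show m+m+2 = r+2*k+3 by omega,
        show m+m+1 = r+2*k+2 by omega,
        show m+m = r+2*k+1 by omega]
      exact key_poly q hq0 s r k
  · -- n = 2m+1, oldn = 2m+2 even
    subst hm
    rw [show (2*m+1+2)/2+1 = (m+1)+1 by omega, show (2*m+1+1)/2+1 = (m+1)+1 by omega]
    refine combineB _ _ _ (m+1) ?_ ?_ ?_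
    · norm_num
      rw [show qDoubleFact q 0 = 1 from rfl, mul_one, mul_one,
        div_self (qFact_ne hq0 _), div_self (qFact_ne hq0 _)]
    · rw [show 2*m+1+1-2*(m+1) = 0 by omega, qNum_zero]
      simp
    · intro k hk
      obtain ⟨r, hr⟩ : ∃ r, 2*m+1+1 = r+2*k+2 := ⟨2*m-2*k, by omega⟩
      rw [show (k+1)*((k+1)-1) = (k+1)*k from rfl,
        show 2*m+1+2-2*(k+1) = r+1 by omega,
        show 2*m+1+1-2*(k+1)+1 = r+1 by omega,
        show 2*m+1+1-2*(k+1) = r by omega,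
        show 2*m+1+1-2*k-1 = r+1 by omega,
        show 2*m+1+1-2*k = r+2 by omega,
        show 2*m+1+2 = r+2*k+3 by omega,
        show 2*m+1+1 = r+2*k+2 by omega,
        show 2*m+1 = r+2*k+1 by omega]
      exact key_poly q hq0 s r k

lemma qHermite_zero (q s : ℝ) : qHermite q s 0 = 1 := by
  simp [qHermite, qFact, qDoubleFact]

lemma qHermite_one (q s : ℝ) : qHermite q s 1 = Polynomial.X := by
  simp [qHermite, qFact, qDoubleFact, qNum]

lemma qHermite_succ_z (q : ℝ) (hq0 : 0 < q) (s : ℝ) (n : ℕ) :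
    qHermite q s (n+1) = Polynomial.X * qHermite q s n
      - Polynomial.C (s * q ^ ((n:ℤ) - 1)) * qDeriv q (qHermite q s n) := by
  cases n with
  | zero => simp [qHermite_zero, qHermite_one, qDeriv_one]
  | succ n =>
      have h : (((n+1:ℕ):ℤ) - 1) = ((n:ℕ):ℤ) := by push_cast; ring
      rw [h, zpow_natCast]
      exact qHermite_rec q hq0 s n

lemma map_cast_list {α : Type*} (l : List ℕ) (f : ℤ → α) :
    List.map f (do let a ← l; pure ((a:ℤ))) = List.map (fun a : ℕ => f a) l := by
  induction l with
  | nil => rfl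
  | cons a l ih => simpa using ih


/-- `H_n(x,s|q)` equals the composition `(M_x - s q^{n-2} D_q) ∘ ⋯ ∘ (M_x - s q^{-1} D_q)`
(the `j`-th factor from the left being `M_x - s q^{n-1-j} D_q`, `j = 1,…,n`)
applied to the constant polynomial `1`. -/
theorem qHermite_eq_comp_apply_one (q : ℝ) (hq0 : 0 < q) (hq1 : q < 1) (s : ℝ) (n : ℕ)
    (hn : 1 ≤ n) :
    qHermite q s n =
      (((List.range n).map fun i => fun g : Polynomial ℝ =>
            Polynomial.X * g - Polynomial.C (s * q ^ ((n : ℤ) - 1 - ((i : ℤ) + 1))) * qDeriv q g).foldr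
          (· ∘ ·) id) 1 := by
  clear hn
  induction n with
  | zero => simp [qHermite_zero]
  | succ n ih =>
      rw [List.range_succ_eq_map, map_cast_list, List.map_cons, List.map_map, List.foldr_cons]
      rw [map_cast_list] at ih
      have hf : ((fun a : ℕ => fun g : Polynomial ℝ =>
            Polynomial.X * g
              - Polynomial.C (s * q ^ (((n+1:ℕ) : ℤ) - 1 - ((a : ℤ) + 1))) * qDeriv q g)
            ∘ Nat.succ)
          = (fun a : ℕ => fun g : Polynomial ℝ =>
            Polynomial.X * g
              - Polynomial.C (s * q ^ ((n : ℤ) - 1 - ((a : ℤ) + 1))) * qDeriv q g) := by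
        funext a g
        have he : ((((n+1:ℕ)) : ℤ) - 1 - ((↑(Nat.succ a) : ℤ) + 1))
            = ((n : ℤ) - 1 - ((a : ℤ) + 1)) := by push_cast; ring
        simp only [Function.comp_apply, he]
      rw [hf, Function.comp_apply, ← ih]
      have he0 : ((((n+1:ℕ)) : ℤ) - 1 - (((0:ℕ) : ℤ) + 1)) = ((n : ℤ) - 1) := by
        push_cast; ring
      rw [he0]
      exact qHermite_succ_z q hq0 s n
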